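/- Let F be a finite nonempty family of Banach contractions of a complete metric space X with attractor A_F. Then for every nonempty compact set K ⊆ X, the sequence of iterations F^n(K) converges to A_F in the Hausdorff metric on the hyperspace of nonempty compact subsets of X, where F(D) = ⋃_{f∈F} f(D). -/

import Mathlib

open Set

open EMetric in
private lemma lip_infEdist_le {X : Type} [MetricSpace X] {c : NNReal} {f : X → X}
    (hf : LipschitzWith c f) (x : X) {E : Set X} (hE : E.Nonempty) :
    infEdist (f x) (f '' E) ≤ (c : ENNReal) * infEdist x E := by
  have : Nonempty E := hE.to_subtype
  have h1 : infEdist (f x) (f '' E) ≤ ⨅ y : E, (c : ENNReal) * edist x y :=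
    le_iInf fun y =>
      (infEdist_le_edist_of_mem (mem_image_of_mem f y.2)).trans (hf.edist_le_mul x y)
  rwa [← ENNReal.mul_iInf (by simp), show (⨅ y : E, edist x (y : X)) = infEdist x E by
    rw [infEdist, Metric.infEDist, iInf_subtype'']] at h1

open EMetric in
private lemma union_contract {X : Type} [MetricSpace X] (F : Set (X → X))
    {c : NNReal} (hc : ∀ f ∈ F, LipschitzWith c f)
    {D E : Set X} (hD : D.Nonempty) (hE : E.Nonempty) :
    hausdorffEdist (⋃ f ∈ F, f '' D) (⋃ f ∈ F, f '' E)
      ≤ (c : ENNReal) * hausdorffEdist D E := by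
  apply hausdorffEdist_le_of_infEdist
  · rintro x hx
    simp only [mem_iUnion] at hx
    obtain ⟨f, hf, x₀, hx₀, rfl⟩ := hx
    calc infEdist (f x₀) (⋃ g ∈ F, g '' E) ≤ infEdist (f x₀) (f '' E) :=
          infEdist_anti (subset_iUnion₂ (s := fun g (_ : g ∈ F) => g '' E) f hf)
      _ ≤ (c : ENNReal) * infEdist x₀ E := lip_infEdist_le (hc f hf) x₀ hE
      _ ≤ (c : ENNReal) * hausdorffEdist D E :=
          mul_le_mul_of_nonneg_left (infEdist_le_hausdorffEdist_of_mem hx₀) (by simp)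
  · rintro x hx
    simp only [mem_iUnion] at hx
    obtain ⟨f, hf, x₀, hx₀, rfl⟩ := hx
    calc infEdist (f x₀) (⋃ g ∈ F, g '' D) ≤ infEdist (f x₀) (f '' D) :=
          infEdist_anti (subset_iUnion₂ (s := fun g (_ : g ∈ F) => g '' D) f hf)
      _ ≤ (c : ENNReal) * infEdist x₀ D := lip_infEdist_le (hc f hf) x₀ hD
      _ ≤ (c : ENNReal) * hausdorffEdist D E := by
          rw [hausdorffEdist, Metric.hausdorffEDist_comm]
          exact mul_le_mul_of_nonneg_left (infEdist_le_hausdorffEdist_of_mem hx₀) (by simp)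

/-- For a finite nonempty family `F` of Banach contractions of a complete metric space
with attractor `A`, the iterations `Fⁿ(K)` of any nonempty compact set `K` converge to
`A` in the Hausdorff metric. -/
theorem stmt8 {X : Type} [MetricSpace X] [CompleteSpace X]
    (F : Set (X → X)) (hfin : F.Finite) (hne : F.Nonempty)
    (hlip : ∀ f ∈ F, ∃ K : NNReal, K < 1 ∧ LipschitzWith K f)
    (A : Set X) (hAne : A.Nonempty) (hAcp : IsCompact A) (hA : A = ⋃ f ∈ F, f '' A)
    (K : Set X) (hKne : K.Nonempty) (hKcp : IsCompact K)
    (S : ℕ → Set X) (hS0 : S 0 = K) (hSrec : ∀ m : ℕ, S (m + 1) = ⋃ f ∈ F, f '' S m) :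
    Filter.Tendsto (fun m : ℕ => Metric.hausdorffDist (S m) A) Filter.atTop (nhds 0) := by
  classical
  -- common contraction constant
  choose! k hk1 hklip using hlip
  set c : NNReal := hfin.toFinset.sup k with hc
  have hcf : ∀ f ∈ F, LipschitzWith c f := fun f hf =>
    (hklip f hf).weaken (Finset.le_sup (hfin.mem_toFinset.mpr hf))
  have hc1 : c < 1 := by
    rw [hc, Finset.sup_lt_iff (by norm_num : (⊥ : NNReal) < 1)]
    exact fun f hf => hk1 f (hfin.mem_toFinset.mp hf)
  -- S m nonempty and bounded
  obtain ⟨f₀, hf₀⟩ := hne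
  have hSn : ∀ m, (S m).Nonempty ∧ IsCompact (S m) := by
    intro m
    induction m with
    | zero => exact hS0 ▸ ⟨hKne, hKcp⟩
    | succ n ih =>
      rw [hSrec]
      constructor
      · obtain ⟨x, hx⟩ := ih.1
        exact ⟨f₀ x, mem_iUnion₂.mpr ⟨f₀, hf₀, ⟨x, hx, rfl⟩⟩⟩
      · exact hfin.isCompact_biUnion fun f hf =>
          ih.2.image (hcf f hf).continuous
  have hfinE : ∀ m, EMetric.hausdorffEdist (S m) A ≠ ⊤ := fun m =>
    Metric.hausdorffEdist_ne_top_of_nonempty_of_bounded (hSn m).1 hAne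
      (hSn m).2.isBounded hAcp.isBounded
  -- geometric bound
  have hbound : ∀ m, EMetric.hausdorffEdist (S m) A
      ≤ (c : ENNReal) ^ m * EMetric.hausdorffEdist K A := by
    intro m
    induction m with
    | zero => simp [hS0]
    | succ n ih =>
      calc EMetric.hausdorffEdist (S (n + 1)) A
          = EMetric.hausdorffEdist (⋃ f ∈ F, f '' S n) (⋃ f ∈ F, f '' A) := by
            rw [hSrec, ← hA]
        _ ≤ (c : ENNReal) * EMetric.hausdorffEdist (S n) A :=
            union_contract F hcf (hSn n).1 hAne
        _ ≤ (c : ENNReal) * ((c : ENNReal) ^ n * EMetric.hausdorffEdist K A) :=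
            mul_le_mul_of_nonneg_left ih (by simp)
        _ = (c : ENNReal) ^ (n + 1) * EMetric.hausdorffEdist K A := by ring
  -- convert to real and squeeze
  have hfinK : EMetric.hausdorffEdist K A ≠ ⊤ :=
    Metric.hausdorffEdist_ne_top_of_nonempty_of_bounded hKne hAne
      hKcp.isBounded hAcp.isBounded
  have hreal : ∀ m, Metric.hausdorffDist (S m) A
      ≤ (c : ℝ) ^ m * Metric.hausdorffDist K A := by
    intro m
    have := ENNReal.toReal_mono (by
        exact ENNReal.mul_ne_top (by simp) hfinK) (hbound m)
    rwa [ENNReal.toReal_mul, ENNReal.toReal_pow, ENNReal.coe_toReal] at this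
  have hto : Filter.Tendsto (fun m : ℕ => (c : ℝ) ^ m * Metric.hausdorffDist K A)
      Filter.atTop (nhds 0) := by
    rw [show (0 : ℝ) = 0 * Metric.hausdorffDist K A by ring]
    exact (tendsto_pow_atTop_nhds_zero_of_lt_one c.coe_nonneg
      (by exact_mod_cast hc1)).mul_const _
  exact squeeze_zero (fun m => Metric.hausdorffDist_nonneg) hreal hto
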